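/- arXiv:2003.01145 — 2 statements merged into one kernel-verified Lean document; each statement's English description precedes it below -/
import Mathlib

section
/- Let V be a finite-dimensional Γ-graded vector space with non-degenerate ε-symmetric form. For f ∈ so_ε(V,(·,·)), the image of μ_can^{-1}(f) under the quantisation map Q_2 into the ε-Clifford algebra equals -(1/2) Σ_i f(e^i) e_i (Clifford product), where {e_i} is a basis of V and {e^i} its dual basis. -/
open scoped BigOperators TensorProduct

/-- A commutation factor on an abelian group `Γ` with values in a field `k`. -/
structure CommFactor (k : Type) [Field k] (Γ : Type) [AddCommGroup Γ] : Type where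
  eps : Γ → Γ → k
  eps_symm : ∀ a b, eps a b * eps b a = 1
  eps_add_left : ∀ a b c, eps (a + b) c = eps a c * eps b c
  eps_add_right : ∀ a b c, eps a (b + c) = eps a b * eps a c

/-- The cocycle `p(σ; v₁,…,vₙ)` of the sign-twisted action of `Sₙ` on `V^{⊗n}`,
expressed in terms of the degrees `d i` of the homogeneous vectors. -/
noncomputable def cocycle {k : Type} [Field k] {Γ : Type} [AddCommGroup Γ]
    (E : CommFactor k Γ) {n : ℕ} (σ : Equiv.Perm (Fin n)) (d : Fin n → Γ) : k :=
  ((Equiv.Perm.sign σ : ℤ) : k) *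
    ∏ x ∈ Finset.univ.filter
        (fun x : Fin n × Fin n => x.1 < x.2 ∧ σ⁻¹ x.2 < σ⁻¹ x.1),
      E.eps (d x.1) (d x.2)

/-- The defining relations of the `ε`-Clifford algebra of `(V, P)`.
Taking `P = 0` yields the `ε`-exterior algebra. -/
inductive CliffRel {k Γ V : Type} [Field k] [AddCommGroup Γ] [AddCommGroup V] [Module k V]
    (E : CommFactor k Γ) (𝒱 : Γ → Submodule k V) (P : V →ₗ[k] V →ₗ[k] k) :
    TensorAlgebra k V → TensorAlgebra k V → Prop
  | mk (a b : Γ) (x y : V) (hx : x ∈ 𝒱 a) (hy : y ∈ 𝒱 b) :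
      CliffRel E 𝒱 P
        (TensorAlgebra.ι k x * TensorAlgebra.ι k y
          + E.eps a b • (TensorAlgebra.ι k y * TensorAlgebra.ι k x))
        ((2 * P x y) • (1 : TensorAlgebra k V))

/-- The `ε`-Clifford algebra `C_ε(V, P)`; for `P = 0` this is the `ε`-exterior algebra. -/
abbrev Cliff {k Γ V : Type} [Field k] [AddCommGroup Γ] [AddCommGroup V] [Module k V]
    (E : CommFactor k Γ) (𝒱 : Γ → Submodule k V) (P : V →ₗ[k] V →ₗ[k] k) :=
  RingQuot (CliffRel E 𝒱 P)

/-- The canonical image of `v : V` in the `ε`-Clifford algebra. -/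
noncomputable def cl {k Γ V : Type} [Field k] [AddCommGroup Γ] [AddCommGroup V] [Module k V]
    (E : CommFactor k Γ) (𝒱 : Γ → Submodule k V) (P : V →ₗ[k] V →ₗ[k] k) (v : V) :
    Cliff E 𝒱 P :=
  RingQuot.mkAlgHom k (CliffRel E 𝒱 P) (TensorAlgebra.ι k v)

/-- The product `v₁ ⋯ vₙ` in the `ε`-Clifford algebra. -/
noncomputable def clProd {k Γ V : Type} [Field k] [AddCommGroup Γ] [AddCommGroup V] [Module k V]
    (E : CommFactor k Γ) (𝒱 : Γ → Submodule k V) (P : V →ₗ[k] V →ₗ[k] k)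
    {n : ℕ} (v : Fin n → V) : Cliff E 𝒱 P :=
  (List.ofFn fun i => cl E 𝒱 P (v i)).prod

/-- The `n`-th `ε`-exterior power `Λ^n_ε(V)`, as a subspace of the `ε`-exterior algebra. -/
noncomputable def extPow {k Γ V : Type} [Field k] [AddCommGroup Γ] [AddCommGroup V] [Module k V]
    (E : CommFactor k Γ) (𝒱 : Γ → Submodule k V) (n : ℕ) :
    Submodule k (Cliff E 𝒱 (0 : V →ₗ[k] V →ₗ[k] k)) :=
  Submodule.span k {z | ∃ v : Fin n → V, z = clProd E 𝒱 0 v}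

/-- The wedge `v₁ ∧ ⋯ ∧ vₙ` as an element of `Λ^n_ε(V)`. -/
noncomputable def extGen {k Γ V : Type} [Field k] [AddCommGroup Γ] [AddCommGroup V] [Module k V]
    (E : CommFactor k Γ) (𝒱 : Γ → Submodule k V) {n : ℕ} (v : Fin n → V) :
    ↥(extPow E 𝒱 n) :=
  ⟨clProd E 𝒱 0 v, Submodule.subset_span ⟨v, rfl⟩⟩

/-- The set of homogeneous elements of the `ε`-orthogonal colour Lie algebra
`so_ε(V, P)`; the algebra itself is its span. -/
def soSet {k Γ V : Type} [Field k] [AddCommGroup Γ] [AddCommGroup V] [Module k V]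
    (E : CommFactor k Γ) (𝒱 : Γ → Submodule k V) (P : V →ₗ[k] V →ₗ[k] k) :
    Set (Module.End k V) :=
  {f | ∃ γ : Γ, (∀ a : Γ, ∀ x ∈ 𝒱 a, f x ∈ 𝒱 (a + γ)) ∧
       (∀ a b : Γ, ∀ x ∈ 𝒱 a, ∀ y ∈ 𝒱 b, P (f x) y + E.eps γ a * P x (f y) = 0)}

section Aux

variable {k Γ V : Type} [Field k] [AddCommGroup Γ] [AddCommGroup V] [Module k V]

namespace CommFactor

variable (E : CommFactor k Γ)

lemma eps_ne_zero (a b : Γ) : E.eps a b ≠ 0 := by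
  intro h0
  have := E.eps_symm a b
  rw [h0] at this; simp at this

lemma eps_zero_left (a : Γ) : E.eps 0 a = 1 := by
  have h := E.eps_add_left 0 0 a
  rw [add_zero] at h
  exact mul_left_cancel₀ (eps_ne_zero E 0 a) (h.symm.trans (mul_one _).symm)

lemma eps_zero_right (a : Γ) : E.eps a 0 = 1 := by
  have h := E.eps_symm a 0
  rw [eps_zero_left] at h; simpa using h

lemma eps_self_sq (a : Γ) : E.eps a a * E.eps a a = 1 := E.eps_symm a a

lemma eps_neg_self (a : Γ) : E.eps (-a) a = E.eps a a := by
  have h : E.eps (-a) a * E.eps a a = 1 := by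
    rw [← E.eps_add_left]; simp [eps_zero_left]
  exact mul_right_cancel₀ (eps_ne_zero E a a) (h.trans (eps_self_sq E a).symm)

lemma eps_neg_neg (a : Γ) : E.eps (-a) (-a) = E.eps a a := by
  have h : E.eps (-a) (-a) * E.eps (-a) a = 1 := by
    rw [← E.eps_add_right]; simp [eps_zero_right]
  rw [eps_neg_self] at h
  exact mul_right_cancel₀ (eps_ne_zero E a a) (h.trans (eps_self_sq E a).symm)

end CommFactor

variable (E : CommFactor k Γ)

lemma cocycle_one (dv : Fin 2 → Γ) : cocycle E (1 : Equiv.Perm (Fin 2)) dv = 1 := by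
  unfold cocycle
  have h : (Finset.univ.filter
        (fun x : Fin 2 × Fin 2 => x.1 < x.2 ∧ (1 : Equiv.Perm (Fin 2))⁻¹ x.2 < (1 : Equiv.Perm (Fin 2))⁻¹ x.1)) = ∅ := by decide
  rw [h]; simp

lemma cocycle_swap (dv : Fin 2 → Γ) :
    cocycle E (Equiv.swap (0 : Fin 2) 1) dv = -E.eps (dv 0) (dv 1) := by
  unfold cocycle
  have h : (Finset.univ.filter
        (fun x : Fin 2 × Fin 2 => x.1 < x.2 ∧ (Equiv.swap (0:Fin 2) 1)⁻¹ x.2 < (Equiv.swap (0:Fin 2) 1)⁻¹ x.1)) = {((0:Fin 2),(1:Fin 2))} := by decide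
  rw [h]
  have hs : Equiv.Perm.sign (Equiv.swap (0:Fin 2) 1) = -1 := by decide
  rw [hs]; simp

lemma perm_fin2_univ : (Finset.univ : Finset (Equiv.Perm (Fin 2))) = {1, Equiv.swap 0 1} := by decide

variable (𝒱 : Γ → Submodule k V) (P : V →ₗ[k] V →ₗ[k] k)

lemma cl_add (x y : V) : cl E 𝒱 P (x + y) = cl E 𝒱 P x + cl E 𝒱 P y := by
  simp [cl, map_add]

lemma cl_smul (c : k) (x : V) : cl E 𝒱 P (c • x) = c • cl E 𝒱 P x := by
  simp [cl, map_smul]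

lemma cl_zero : cl E 𝒱 P 0 = 0 := by simp [cl, map_zero]

lemma clProd_two (x y : V) : clProd E 𝒱 P ![x, y] = cl E 𝒱 P x * cl E 𝒱 P y := by
  simp [clProd, List.ofFn_succ]

lemma cliff_relation {a b : Γ} {x y : V} (hx : x ∈ 𝒱 a) (hy : y ∈ 𝒱 b) :
    cl E 𝒱 P x * cl E 𝒱 P y + E.eps a b • (cl E 𝒱 P y * cl E 𝒱 P x)
      = (2 * P x y) • (1 : Cliff E 𝒱 P) := by
  have h := RingQuot.mkAlgHom_rel k (CliffRel.mk (E := E) (𝒱 := 𝒱) (P := P) a b x y hx hy)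
  simpa [cl, map_add, map_mul, map_smul, map_one] using h

lemma homog_ind [DecidableEq Γ] (hint : DirectSum.IsInternal 𝒱) {p : V → Prop} (h0 : p 0)
    (hadd : ∀ x y, p x → p y → p (x + y)) (hhom : ∀ a : Γ, ∀ x ∈ 𝒱 a, p x) (v : V) : p v := by
  have hv : v ∈ ⨆ a, 𝒱 a := by
    rw [hint.submodule_iSup_eq_top]; exact Submodule.mem_top
  exact Submodule.iSup_induction 𝒱 (motive := p) hv hhom h0 hadd

lemma supp_lemma {ι : Type} [Fintype ι] [DecidableEq ι] [DecidableEq Γ]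
    (hint : DirectSum.IsInternal 𝒱) (e : Module.Basis ι k V) (d : ι → Γ) (he : ∀ i, e i ∈ 𝒱 (d i))
    {c : Γ} {v : V} (hv : v ∈ 𝒱 c) {j : ι} (hj : d j ≠ c) : e.repr v j = 0 := by
  set decomp := (LinearEquiv.ofBijective (DirectSum.coeLinearMap 𝒱) hint).symm with hdecomp
  set Φ : V →ₗ[k] V :=
    (𝒱 (d j)).subtype ∘ₗ (DirectSum.component k Γ (fun a => ↥(𝒱 a)) (d j)) ∘ₗ
      decomp.toLinearMap with hΦ
  have hΦapp : ∀ w : V, Φ w = ↑(decomp w (d j)) := fun w => rfl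
  have hΦv : Φ v = 0 := by
    rw [hΦapp, hint.ofBijective_coeLinearMap_of_mem_ne (Ne.symm hj) hv]
    rfl
  have hΦe : ∀ m : ι, Φ (e m) = if d m = d j then e m else 0 := by
    intro m
    rw [hΦapp]
    by_cases h : d m = d j
    · rw [if_pos h]
      have : e m ∈ 𝒱 (d j) := h ▸ he m
      rw [hint.ofBijective_coeLinearMap_of_mem this]
    · rw [if_neg h, hint.ofBijective_coeLinearMap_of_mem_ne h (he m)]
      rfl
  have hkey : e.coord j (Φ v) = e.repr v j := by
    conv_lhs => rw [← e.sum_repr v]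
    rw [map_sum, map_sum]
    have : ∀ m : ι, e.coord j (Φ (e.repr v m • e m)) = if m = j then e.repr v m else 0 := by
      intro m
      rw [map_smul, map_smul, hΦe m]
      by_cases h : d m = d j
      · rw [if_pos h]
        simp [Module.Basis.coord_apply, Module.Basis.repr_self, Finsupp.single_apply]
      · rw [if_neg h]
        have hmj : ¬ (m = j) := fun hh => h (hh ▸ rfl)
        simp [hmj]
    rw [Finset.sum_congr rfl (fun m _ => this m)]
    simp
  rw [hΦv] at hkey
  simpa using hkey.symm

end Aux

/-- For `f ∈ so_ε(V, P)`, the quantisation of `μ_can⁻¹(f) = -½ Σᵢ f(eⁱ) ∧ eᵢ` in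
the `ε`-Clifford algebra is the Clifford element `-½ Σᵢ f(eⁱ) eᵢ`. -/
theorem quantisation_momentMap_inverse {k Γ V : Type} [Field k] [AddCommGroup Γ]
    [DecidableEq Γ] [AddCommGroup V] [Module k V] [FiniteDimensional k V]
    {ι : Type} [Fintype ι] [DecidableEq ι]
    (E : CommFactor k Γ) (𝒱 : Γ → Submodule k V) (hint : DirectSum.IsInternal 𝒱)
    (P : V →ₗ[k] V →ₗ[k] k)
    (hPsymm : ∀ a b : Γ, ∀ v ∈ 𝒱 a, ∀ w ∈ 𝒱 b, P v w = E.eps a b * P w v)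
    (hPdeg : ∀ a b : Γ, a + b ≠ 0 → ∀ v ∈ 𝒱 a, ∀ w ∈ 𝒱 b, P v w = 0)
    (hPnd : ∀ v : V, (∀ w : V, P v w = 0) → v = 0)
    (h2 : (2 : k) ≠ 0)
    (e : Module.Basis ι k V) (d : ι → Γ) (he : ∀ i, e i ∈ 𝒱 (d i))
    (fd : ι → V) (hfd : ∀ i j, P (e i) (fd j) = if i = j then (1 : k) else 0)
    (Q2 : ↥(extPow E 𝒱 2) →ₗ[k] Cliff E 𝒱 P)
    (hQ2 : ∀ (v : Fin 2 → V) (dv : Fin 2 → Γ), (∀ i, v i ∈ 𝒱 (dv i)) →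
        Q2 (extGen E 𝒱 v)
          = (2 : k)⁻¹ • ∑ σ : Equiv.Perm (Fin 2),
              cocycle E σ dv • clProd E 𝒱 P (v ∘ σ)) :
    ∀ f ∈ Submodule.span k (soSet E 𝒱 P),
      Q2 ((-(2 : k)⁻¹) • ∑ i, extGen E 𝒱 ![f (fd i), e i])
        = (-(2 : k)⁻¹) • ∑ i, cl E 𝒱 P (f (fd i)) * cl E 𝒱 P (e i) := by
  intro f hf
  classical
  -- Step 1: quantisation of a single generator, for arbitrary first entry.
  have key1 : ∀ (j : ι) (x : V),
      Q2 (extGen E 𝒱 ![x, e j])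
        = cl E 𝒱 P x * cl E 𝒱 P (e j) - (P x (e j)) • 1 := by
    intro j
    refine homog_ind 𝒱 hint ?_ ?_ ?_
    · have h0 : extGen E 𝒱 ![(0:V), e j] = 0 := by
        apply Subtype.ext
        show clProd E 𝒱 0 ![(0:V), e j] = 0
        rw [clProd_two, cl_zero, zero_mul]
      rw [h0, map_zero, cl_zero, zero_mul, map_zero, LinearMap.zero_apply, zero_smul, sub_zero]
    · intro x y hx hy
      have hadd : extGen E 𝒱 ![x + y, e j] = extGen E 𝒱 ![x, e j] + extGen E 𝒱 ![y, e j] := by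
        apply Subtype.ext
        show clProd E 𝒱 0 ![x + y, e j]
          = clProd E 𝒱 0 ![x, e j] + clProd E 𝒱 0 ![y, e j]
        rw [clProd_two, clProd_two, clProd_two, cl_add, add_mul]
      rw [hadd, map_add, hx, hy, cl_add, add_mul, map_add, LinearMap.add_apply, add_smul]
      abel
    · intro a x hx
      rw [hQ2 ![x, e j] ![a, d j] (by intro i; fin_cases i <;> simp [hx, he j])]
      rw [perm_fin2_univ, Finset.sum_insert (by decide), Finset.sum_singleton,
        cocycle_one, cocycle_swap]
      have hc1 : ![x, e j] ∘ ⇑(1 : Equiv.Perm (Fin 2)) = ![x, e j] := by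
        funext i; simp
      have hc2 : ![x, e j] ∘ ⇑(Equiv.swap (0:Fin 2) 1) = ![e j, x] := by
        funext i; fin_cases i <;> simp
      rw [hc1, hc2, clProd_two, clProd_two]
      have h3 : E.eps a (d j) • (cl E 𝒱 P (e j) * cl E 𝒱 P x)
          = (2 * P x (e j)) • (1 : Cliff E 𝒱 P) - cl E 𝒱 P x * cl E 𝒱 P (e j) :=
        eq_sub_of_add_eq' (cliff_relation E 𝒱 P hx (he j))
      simp only [Matrix.cons_val_zero, Matrix.cons_val_one, Matrix.head_cons, one_smul]
      have h5 : ((-E.eps a (d j)) • (cl E 𝒱 P (e j) * cl E 𝒱 P x) : Cliff E 𝒱 P)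
          = -(E.eps a (d j) • (cl E 𝒱 P (e j) * cl E 𝒱 P x)) :=
        neg_smul (E.eps a (d j)) (cl E 𝒱 P (e j) * cl E 𝒱 P x)
      rw [h5, h3]
      have h4 : cl E 𝒱 P x * cl E 𝒱 P (e j)
            + -((2 * P x (e j)) • (1 : Cliff E 𝒱 P) - cl E 𝒱 P x * cl E 𝒱 P (e j))
          = (2:k) • (cl E 𝒱 P x * cl E 𝒱 P (e j)) - (2 * P x (e j)) • 1 := by
        rw [two_smul]; abel
      rw [h4, smul_sub, smul_smul, smul_smul, inv_mul_cancel₀ h2, one_smul, ← mul_assoc,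
        inv_mul_cancel₀ h2, one_mul]
  -- Step 2: the dual pairing computes coordinates.
  have hD' : ∀ (jj : ι) (v : V), P v (fd jj) = e.repr v jj := by
    intro jj
    have h : P.flip (fd jj) = e.coord jj := by
      apply e.ext
      intro m
      by_cases hm : m = jj
      · subst hm; simp [LinearMap.flip_apply, hfd]
      · simp [LinearMap.flip_apply, hfd, hm, Module.Basis.coord_apply, Module.Basis.repr_self,
          Finsupp.single_apply, Ne.symm hm]
    intro v
    simpa [LinearMap.flip_apply, Module.Basis.coord_apply] using LinearMap.congr_fun h v
  -- Step 3: the supertrace identity for homogeneous elements of so.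
  have trace0 : ∀ g ∈ soSet E 𝒱 P, ∑ i, P (g (fd i)) (e i) = 0 := by
    rintro g ⟨γ, hγ1, hγ2⟩
    have hR1 : ∀ (i : ι) (w : V), P w (e i) = E.eps (d i) (d i) * P (e i) w := by
      intro i
      refine homog_ind 𝒱 hint ?_ ?_ ?_
      · simp
      · intro x y hx hy
        rw [map_add, LinearMap.add_apply, hx, hy, map_add]; ring
      · intro a w hw
        by_cases h0 : a + d i = 0
        · have ha : a = -d i := eq_neg_of_add_eq_zero_left h0
          rw [hPsymm a (d i) w hw (e i) (he i), ha, E.eps_neg_self]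
        · rw [hPdeg a (d i) h0 w hw (e i) (he i),
            hPdeg (d i) a (fun hh => h0 (by rw [add_comm]; exact hh)) (e i) (he i) w hw,
            mul_zero]
    rcases isEmpty_or_nonempty ι with hι | hι
    · simp
    · have hli : LinearIndependent k fd := by
        rw [Fintype.linearIndependent_iff]
        intro c hc i
        have hc2 := congrArg (P (e i)) hc
        rw [map_sum, map_zero] at hc2
        simpa [map_smul, hfd, smul_eq_mul] using hc2
      have hcard : Fintype.card ι = Module.finrank k V := (Module.finrank_eq_card_basis e).symm
      set b' : Module.Basis ι k V := basisOfLinearIndependentOfCardEqFinrank hli hcard with hb'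
      have hb'coe : ∀ i2, b' i2 = fd i2 := fun i2 => by
        rw [hb', coe_basisOfLinearIndependentOfCardEqFinrank]
      have hb'coord : ∀ (i : ι) (v : V), b'.repr v i = P (e i) v := by
        intro i
        have h : b'.coord i = P (e i) := by
          apply b'.ext
          intro m
          rw [Module.Basis.coord_apply, Module.Basis.repr_self, hb'coe m]
          by_cases hm : m = i
          · subst hm; simp [hfd]
          · simp [Finsupp.single_apply, hm, hfd, Ne.symm hm]
        intro v
        rw [← Module.Basis.coord_apply, h]
      set g0 : V →ₗ[k] V := e.constr k (fun i => E.eps (d i) (d i) • e i) with hg0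
      have hg0e : ∀ m, g0 (e m) = E.eps (d m) (d m) • e m := fun m => e.constr_basis k _ m
      have hgA : ∀ (i : ι) (v : V), e.repr (g0 v) i = E.eps (d i) (d i) * e.repr v i := by
        intro i
        have h : e.coord i ∘ₗ g0 = E.eps (d i) (d i) • e.coord i := by
          apply e.ext
          intro m
          simp only [LinearMap.comp_apply, LinearMap.smul_apply, hg0e, map_smul, smul_eq_mul]
          by_cases hm : m = i
          · subst hm; simp [Module.Basis.coord_apply, Module.Basis.repr_self]
          · simp [Module.Basis.coord_apply, Module.Basis.repr_self, Finsupp.single_apply, hm]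
        intro v
        simpa [Module.Basis.coord_apply, smul_eq_mul] using LinearMap.congr_fun h v
      have hgB : ∀ (i : ι) (v : V), P (e i) (g0 v) = E.eps (d i) (d i) * P (e i) v := by
        intro i
        have h : (P (e i)) ∘ₗ g0 = E.eps (d i) (d i) • (P (e i)) := by
          apply e.ext
          intro m
          simp only [LinearMap.comp_apply, LinearMap.smul_apply, hg0e, map_smul, smul_eq_mul]
          by_cases h0 : d i + d m = 0
          · have hm : d m = -d i := eq_neg_of_add_eq_zero_right h0
            rw [hm, E.eps_neg_neg]
          · rw [hPdeg (d i) (d m) h0 (e i) (he i) (e m) (he m)]; ring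
        intro v
        simpa [smul_eq_mul] using LinearMap.congr_fun h v
      have hrel : ∀ (i : ι) (y : V),
          P (g (e i)) y + E.eps γ (d i) * P (e i) (g y) = 0 := by
        intro i
        refine homog_ind 𝒱 hint ?_ ?_ ?_
        · simp
        · intro x y hx hy
          simp only [map_add, mul_add]
          linear_combination hx + hy
        · intro b y hy
          exact hγ2 (d i) b (e i) (he i) y hy
      set A : ι → k := fun i => e.repr (g (e i)) i with hA
      have hsupp : ∀ i, E.eps (d i) γ * A i = A i := by
        intro i
        by_cases h0 : A i = 0
        · rw [h0, mul_zero]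
        · have hγ0 : γ = 0 := by
            by_contra hne
            have hdd : d i ≠ d i + γ := fun hh => hne ((left_eq_add).mp hh)
            exact h0 (supp_lemma 𝒱 hint e d he (hγ1 (d i) (e i) (he i)) hdd)
          rw [hγ0, E.eps_zero_right, one_mul]
      set T := LinearMap.trace k V (g0 ∘ₗ (g : V →ₗ[k] V)) with hT
      have hTe : T = ∑ i, E.eps (d i) (d i) * A i := by
        rw [hT, LinearMap.trace_eq_matrix_trace k e, Matrix.trace]
        apply Finset.sum_congr rfl
        intro i _
        rw [Matrix.diag_apply, LinearMap.toMatrix_apply, LinearMap.comp_apply, hgA]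
      have hTb : T = ∑ i, E.eps (d i) (d i) * P (e i) (g (fd i)) := by
        rw [hT, LinearMap.trace_eq_matrix_trace k b', Matrix.trace]
        apply Finset.sum_congr rfl
        intro i _
        rw [Matrix.diag_apply, LinearMap.toMatrix_apply, LinearMap.comp_apply, hb'coord, hgB,
          hb'coe]
      have hPg : ∀ i, P (e i) (g (fd i)) = -(E.eps (d i) γ * A i) := by
        intro i
        have h1 := hrel i (fd i)
        have h2' : P (g (e i)) (fd i) = A i := hD' i (g (e i))
        have h3 : E.eps γ (d i) * P (e i) (g (fd i)) = -A i := by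
          rw [← h2']; linear_combination h1
        have h4 := congrArg (fun t => E.eps (d i) γ * t) h3
        rw [← mul_assoc, E.eps_symm (d i) γ, one_mul] at h4
        rw [h4, mul_neg]
      have hTT : T = -T := by
        calc T = ∑ i, E.eps (d i) (d i) * P (e i) (g (fd i)) := hTb
          _ = ∑ i, -(E.eps (d i) (d i) * A i) := by
              apply Finset.sum_congr rfl
              intro i _
              rw [hPg i]
              linear_combination (-(E.eps (d i) (d i))) * hsupp i
          _ = -∑ i, E.eps (d i) (d i) * A i := by rw [Finset.sum_neg_distrib]
          _ = -T := by rw [← hTe]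
      have hT0 : T = 0 := by
        have h2T : (2:k) * T = 0 := by rw [two_mul]; linear_combination hTT
        rcases mul_eq_zero.mp h2T with h | h
        · exact absurd h h2
        · exact h
      calc ∑ i, P (g (fd i)) (e i)
          = ∑ i, E.eps (d i) (d i) * P (e i) (g (fd i)) := by
            apply Finset.sum_congr rfl
            intro i _
            rw [hR1 i (g (fd i))]
        _ = T := hTb.symm
        _ = 0 := hT0
  -- Step 4: extend the supertrace identity to the span.
  have hsum0 : ∑ i, P (f (fd i)) (e i) = 0 := by
    refine Submodule.span_induction
      (p := fun g _ => ∑ i, P (g (fd i)) (e i) = 0) ?_ ?_ ?_ ?_ hf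
    · intro g hg; exact trace0 g hg
    · simp
    · intro g1 g2 _ _ h1 h2'
      have : ∀ i : ι, P ((g1 + g2) (fd i)) (e i)
          = P (g1 (fd i)) (e i) + P (g2 (fd i)) (e i) := by
        intro i
        rw [LinearMap.add_apply, map_add, LinearMap.add_apply]
      rw [Finset.sum_congr rfl (fun i _ => this i), Finset.sum_add_distrib, h1, h2', add_zero]
    · intro c g1 _ h1
      have : ∀ i : ι, P ((c • g1) (fd i)) (e i) = c * P (g1 (fd i)) (e i) := by
        intro i
        rw [LinearMap.smul_apply, map_smul, LinearMap.smul_apply, smul_eq_mul]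
      rw [Finset.sum_congr rfl (fun i _ => this i), ← Finset.mul_sum, h1, mul_zero]
  -- Step 5: assemble.
  rw [map_smul, map_sum]
  rw [Finset.sum_congr rfl (fun i _ => key1 i (f (fd i)))]
  rw [Finset.sum_sub_distrib, ← Finset.sum_smul, hsum0, zero_smul, sub_zero]
end

section
/- Let (g,B) be a finite-dimensional ε-quadratic colour Lie algebra with Cartan subalgebra h, root space decomposition, and h self-normalising. For a root α, let h_α ∈ h be the unique element with α = B(h_α,·)|_h. Then for x ∈ g^α and y ∈ g^{-α}, one has {x,y} = B(x,y) h_α. -/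
open scoped BigOperators TensorProduct

/-- A colour Lie algebra structure on a `Γ`-graded vector space. -/
structure IsColourLie {k Γ g : Type} [Field k] [AddCommGroup Γ] [DecidableEq Γ]
    [AddCommGroup g] [Module k g]
    (ε : Γ → Γ → k) (𝒢 : Γ → Submodule k g) (br : g →ₗ[k] g →ₗ[k] g) : Prop where
  internal : DirectSum.IsInternal 𝒢
  bracket_deg : ∀ a b : Γ, ∀ x ∈ 𝒢 a, ∀ y ∈ 𝒢 b, br x y ∈ 𝒢 (a + b)
  antisymm : ∀ a b : Γ, ∀ x ∈ 𝒢 a, ∀ y ∈ 𝒢 b, br x y = -(ε a b) • br y x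
  jacobi : ∀ a b c : Γ, ∀ x ∈ 𝒢 a, ∀ y ∈ 𝒢 b, ∀ z ∈ 𝒢 c,
      ε c a • br x (br y z) + ε a b • br y (br z x) + ε b c • br z (br x y) = 0

/-- An `ε`-quadratic structure: a non-degenerate `ε`-symmetric invariant bilinear
form of degree `0` on a colour Lie algebra. -/
structure IsEpsQuadratic {k Γ g : Type} [Field k] [AddCommGroup Γ]
    [AddCommGroup g] [Module k g]
    (ε : Γ → Γ → k) (𝒢 : Γ → Submodule k g) (br : g →ₗ[k] g →ₗ[k] g)
    (B : g →ₗ[k] g →ₗ[k] k) : Prop where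
  symm : ∀ a b : Γ, ∀ x ∈ 𝒢 a, ∀ y ∈ 𝒢 b, B x y = ε a b * B y x
  deg_zero : ∀ a b : Γ, a + b ≠ 0 → ∀ x ∈ 𝒢 a, ∀ y ∈ 𝒢 b, B x y = 0
  nondeg : ∀ x : g, (∀ y : g, B x y = 0) → x = 0
  invariant : ∀ a b : Γ, ∀ x ∈ 𝒢 a, ∀ y ∈ 𝒢 b, ∀ z : g,
      B (br x y) z = -(ε a b) * B y (br x z)

/-- The root space `g^α` for the action of a Cartan subalgebra `𝔥`. -/
def rootSp {k g : Type} [Field k] [AddCommGroup g] [Module k g]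
    (𝔥 : Submodule k g) (br : g →ₗ[k] g →ₗ[k] g) (α : Module.Dual k g) :
    Submodule k g where
  carrier := {x | ∀ h ∈ 𝔥, br h x = α h • x}
  add_mem' := by
    intro x y hx hy h hh
    rw [map_add, hx h hh, hy h hh, smul_add]
  zero_mem' := by intro h hh; simp
  smul_mem' := by
    intro c x hx h hh
    rw [map_smul, hx h hh, smul_comm]

/-- The `ε`-trace of an endomorphism, computed in a homogeneous basis `e`
with degrees `d`. -/
noncomputable def trEps {k Γ g ι : Type} [Field k] [AddCommGroup Γ]
    [AddCommGroup g] [Module k g] [Fintype ι]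
    (E : CommFactor k Γ) (e : Module.Basis ι k g) (d : ι → Γ) (f : g →ₗ[k] g) : k :=
  ∑ i, E.eps (d i) (d i) * e.repr (f (e i)) i

/-- For a root `α` with coroot `h_α ∈ 𝔥` (i.e. `B(h_α, ·)|_𝔥 = α`), and
`x ∈ g^α`, `y ∈ g^{-α}`, one has `{x, y} = B(x, y) h_α`. -/
theorem bracket_rootSpace_eq_coroot {k Γ g : Type} [Field k] [AddCommGroup Γ] [DecidableEq Γ]
    [AddCommGroup g] [Module k g]
    (E : CommFactor k Γ) (𝒢 : Γ → Submodule k g) (br : g →ₗ[k] g →ₗ[k] g)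
    (hLie : IsColourLie E.eps 𝒢 br)
    (B : g →ₗ[k] g →ₗ[k] k) (hquad : IsEpsQuadratic E.eps 𝒢 br B)
    (𝔥 : Submodule k g) (h𝔥 : 𝔥 ≤ 𝒢 0)
    (hself : rootSp 𝔥 br 0 = 𝔥)
    (hdiag : (⨆ γ : Module.Dual k g, rootSp 𝔥 br γ) = ⊤)
    (α : Module.Dual k g) (hα : g) (hhα : hα ∈ 𝔥)
    (hhαB : ∀ h ∈ 𝔥, B hα h = α h)
    (a b : Γ) (x : g) (hx : x ∈ rootSp 𝔥 br α) (hxh : x ∈ 𝒢 a)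
    (y : g) (hy : y ∈ rootSp 𝔥 br (-α)) (hyh : y ∈ 𝒢 b) :
    br x y = B x y • hα := by
  -- ε(c,0) = 1 and ε(0,c) = 1
  have heps0 : ∀ c : Γ, E.eps c 0 = 1 := by
    intro c
    have h2 : E.eps c 0 ≠ 0 := by
      intro h0
      have := E.eps_symm c 0
      rw [h0, zero_mul] at this
      exact zero_ne_one this
    have h1 := E.eps_add_right c 0 0
    simp only [add_zero] at h1
    exact (mul_left_cancel₀ h2 (by rw [mul_one]; exact h1)).symm
  have heps0' : ∀ c : Γ, E.eps 0 c = 1 := by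
    intro c
    have := E.eps_symm 0 c
    rw [heps0 c, mul_one] at this
    exact this
  -- br x y lies in the zero root space, hence in 𝔥
  have hbrxy0 : br x y ∈ rootSp 𝔥 br 0 := by
    intro h hh
    have hjac := hLie.jacobi 0 a b h (h𝔥 hh) x hxh y hyh
    have hhx : br h x = α h • x := hx h hh
    have hhy : br h y = (-α) h • y := hy h hh
    have hyh' : br y h = α h • y := by
      rw [hLie.antisymm b 0 y hyh h (h𝔥 hh), hhy]
      simp [heps0, smul_smul]
    have hyx : E.eps a b • br y x = -(br x y) := by
      have := hLie.antisymm a b x hxh y hyh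
      rw [this]; simp
    rw [heps0 b, heps0' a, one_smul, one_smul, hyh', hhx, map_smul, map_smul,
      smul_comm (E.eps a b) (α h), hyx] at hjac
    have : br h (br x y) = 0 := by
      have := hjac
      rw [smul_neg] at this
      linear_combination (norm := module) this
    rw [this]
    simp
  have hbrxy𝔥 : br x y ∈ 𝔥 := hself ▸ hbrxy0
  set w := br x y - B x y • hα with hw
  have hw𝔥 : w ∈ 𝔥 := sub_mem hbrxy𝔥 (Submodule.smul_mem _ _ hhα)
  -- B w h = 0 for all h ∈ 𝔥
  have hBwh : ∀ h ∈ 𝔥, B w h = 0 := by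
    intro h hh
    have hinv := hquad.invariant a b x hxh y hyh h
    have hxh' : br x h = -(α h • x) := by
      rw [hLie.antisymm a 0 x hxh h (h𝔥 hh), hx h hh]
      simp [heps0]
    have hsymm := hquad.symm a b x hxh y hyh
    have hBhαh := hhαB h hh
    rw [hxh'] at hinv
    simp only [map_neg, map_smul, smul_eq_mul] at hinv
    have : B (br x y) h = α h * B x y := by
      rw [hinv, hsymm]; ring
    simp only [hw, map_sub, LinearMap.sub_apply, map_smul, LinearMap.smul_apply,
      smul_eq_mul, this, hBhαh]
    ring
  -- w ∈ rootSp 0, so br h w = 0 for h ∈ 𝔥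
  have hw0 : ∀ h ∈ 𝔥, br h w = 0 := by
    intro h hh
    have hwr : w ∈ rootSp 𝔥 br 0 := hself.symm ▸ hw𝔥
    have := hwr h hh
    simpa using this
  -- B w z = 0 for z in any root space
  have hroot : ∀ γ : Module.Dual k g, rootSp 𝔥 br γ ≤ LinearMap.ker (B w) := by
    intro γ z hz
    rw [LinearMap.mem_ker]
    by_cases hγ : ∀ h ∈ 𝔥, γ h = 0
    · -- z ∈ rootSp 0 = 𝔥
      have hz0 : z ∈ rootSp 𝔥 br 0 := by
        intro h hh
        rw [hz h hh, hγ h hh]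
        simp
      exact hBwh z (hself ▸ hz0)
    · push_neg at hγ
      obtain ⟨h, hh, hγh⟩ := hγ
      have hinv := hquad.invariant 0 0 h (h𝔥 hh) w (h𝔥 hw𝔥) z
      rw [hw0 h hh, hz h hh] at hinv
      simp only [map_zero, LinearMap.zero_apply, map_smul, smul_eq_mul, heps0'] at hinv
      have : γ h * B w z = 0 := by
        have := hinv.symm
        rw [neg_one_mul, neg_eq_zero] at this
        exact this
      exact (mul_eq_zero.mp this).resolve_left hγh
  have hker : LinearMap.ker (B w) = ⊤ := by
    rw [← top_le_iff, ← hdiag]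
    exact iSup_le hroot
  have hwzero : w = 0 := by
    apply hquad.nondeg
    intro z
    have : z ∈ LinearMap.ker (B w) := hker ▸ Submodule.mem_top
    exact LinearMap.mem_ker.mp this
  have := sub_eq_zero.mp hwzero
  exact this
end
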